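/- Let n ≥ 3, let G be a finite group with Fintype.card G = n, let m i j = g i * h j be a Cayley matrix of order n, and let T be a finite set of cells. Fix a hole (i₂, j₂) ∈ T and set t₀ = |{(i, j) ∈ T : i ≠ i₂ and j ≠ j₂}|, t_x = |{i ≠ i₂ : (i, j₂) ∈ T}|, and t_y = |{j ≠ j₂ : (i₂, j) ∈ T}|. Then the number of pairs (i₁, j₁) with i₁ ≠ i₂, j₁ ≠ j₂ such that (i₁, j₁), (i₂, j₁), (i₁, j₂) ∉ T, m i₂ j₁ ≠ m i₁ j₂, and m i₁ j₁ ≠ m i₂ j₂ is at least (n - 1) * (n - 3) - t₀ - (t_x + t_y) * (n - 2). -/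
import Mathlib


/-- Counting bound: for a hole `(i₂, j₂)` of a partial Cayley matrix of order
`n ≥ 3` with hole parameters `t₀`, `t_x`, `t_y`, the number of quadrangles at
the hole satisfying (C1), (C2) and (C3) is at least
`(n - 1) * (n - 3) - t₀ - (t_x + t_y) * (n - 2)`. -/
theorem card_C123_quadrangles_ge {n : ℕ} (hn : 3 ≤ n)
    {G : Type*} [Group G] [Fintype G] [DecidableEq G] (hcard : Fintype.card G = n)
    (g h : Fin n → G) (hg : Function.Bijective g) (hh : Function.Bijective h)
    (m : Fin n → Fin n → G) (hm : ∀ i j, m i j = g i * h j)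
    (T : Finset (Fin n × Fin n))
    (i₂ j₂ : Fin n) (hd : (i₂, j₂) ∈ T) :
    (n - 1) * (n - 3)
        - (T.filter (fun c => c.1 ≠ i₂ ∧ c.2 ≠ j₂)).card
        - ((Finset.univ.filter (fun i : Fin n => i ≠ i₂ ∧ (i, j₂) ∈ T)).card +
           (Finset.univ.filter (fun j : Fin n => j ≠ j₂ ∧ (i₂, j) ∈ T)).card) * (n - 2)
      ≤ (Finset.univ.filter (fun p : Fin n × Fin n =>
          p.1 ≠ i₂ ∧ p.2 ≠ j₂ ∧
          (p.1, p.2) ∉ T ∧ (i₂, p.2) ∉ T ∧ (p.1, j₂) ∉ T ∧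
          m i₂ p.2 ≠ m p.1 j₂ ∧ m p.1 p.2 ≠ m i₂ j₂)).card := by
  classical
  set ge := Equiv.ofBijective g hg with hge
  set he := Equiv.ofBijective h hh with hhe
  have hgapp : ∀ x, g x = ge x := fun x => rfl
  have hhapp : ∀ x, h x = he x := fun x => rfl
  set U : Finset (Fin n × Fin n) :=
    (Finset.univ.erase i₂) ×ˢ (Finset.univ.erase j₂) with hUdef
  set S : Finset (Fin n × Fin n) := Finset.univ.filter (fun p : Fin n × Fin n =>
          p.1 ≠ i₂ ∧ p.2 ≠ j₂ ∧
          (p.1, p.2) ∉ T ∧ (i₂, p.2) ∉ T ∧ (p.1, j₂) ∉ T ∧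
          m i₂ p.2 ≠ m p.1 j₂ ∧ m p.1 p.2 ≠ m i₂ j₂) with hSdef
  set B0 : Finset (Fin n × Fin n) := U.filter (fun p => p ∈ T) with hB0def
  set B1 : Finset (Fin n × Fin n) := U.filter (fun p => m i₂ p.2 = m p.1 j₂) with hB1def
  set B2 : Finset (Fin n × Fin n) := U.filter (fun p => m p.1 p.2 = m i₂ j₂) with hB2def
  set Bx : Finset (Fin n × Fin n) := U.filter (fun p => (p.1, j₂) ∈ T) with hBxdef
  set By : Finset (Fin n × Fin n) := U.filter (fun p => (i₂, p.2) ∈ T) with hBydef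
  have hcardFin : (Finset.univ : Finset (Fin n)).card = n := by simp
  have hcE1 : (Finset.univ.erase i₂).card = n - 1 := by
    rw [Finset.card_erase_of_mem (Finset.mem_univ _), hcardFin]
  have hcE2 : (Finset.univ.erase j₂).card = n - 1 := by
    rw [Finset.card_erase_of_mem (Finset.mem_univ _), hcardFin]
  have hUcard : U.card = (n-1) * (n-1) := by
    rw [hUdef, Finset.card_product, hcE1, hcE2]
  -- cover
  have hcover : U ⊆ S ∪ B0 ∪ B1 ∪ B2 ∪ (Bx \ B1) ∪ (By \ B2) := by
    intro p hp
    have hp' := hp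
    rw [hUdef, Finset.mem_product, Finset.mem_erase, Finset.mem_erase] at hp'
    obtain ⟨⟨h1, -⟩, ⟨h2, -⟩⟩ := hp'
    simp only [Finset.mem_union, Finset.mem_sdiff, hSdef, hB0def, hB1def, hB2def,
      hBxdef, hBydef, Finset.mem_filter, Finset.mem_univ, true_and]
    by_cases hA : (p.1, p.2) ∈ T
    · exact Or.inl (Or.inl (Or.inl (Or.inl (Or.inr ⟨hp, hA⟩))))
    by_cases hB : m i₂ p.2 = m p.1 j₂
    · exact Or.inl (Or.inl (Or.inl (Or.inr ⟨hp, hB⟩)))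
    by_cases hC : m p.1 p.2 = m i₂ j₂
    · exact Or.inl (Or.inl (Or.inr ⟨hp, hC⟩))
    by_cases hD : (p.1, j₂) ∈ T
    · exact Or.inl (Or.inr ⟨⟨hp, hD⟩, fun hh' => hB hh'.2⟩)
    by_cases hE : (i₂, p.2) ∈ T
    · exact Or.inr ⟨⟨hp, hE⟩, fun hh' => hC hh'.2⟩
    · exact Or.inl (Or.inl (Or.inl (Or.inl (Or.inl
        ⟨h1, h2, hA, hE, hD, hB, hC⟩))))
  -- card bounds
  have hB0card : B0.card ≤ (T.filter (fun c => c.1 ≠ i₂ ∧ c.2 ≠ j₂)).card := by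
    apply Finset.card_le_card
    intro p hp
    rw [hB0def, Finset.mem_filter] at hp
    obtain ⟨hpU, hpT⟩ := hp
    rw [hUdef, Finset.mem_product, Finset.mem_erase, Finset.mem_erase] at hpU
    exact Finset.mem_filter.2 ⟨hpT, hpU.1.1, hpU.2.1⟩
  have hB1card : B1.card ≤ n - 1 := by
    have : B1 ⊆ (Finset.univ.erase j₂).image
        (fun j => (ge.symm (g i₂ * h j * (h j₂)⁻¹), j)) := by
      intro p hp
      rw [hB1def, Finset.mem_filter] at hp
      obtain ⟨hpU, hpm⟩ := hp
      rw [hUdef, Finset.mem_product] at hpU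
      rw [hm, hm] at hpm
      have : p.1 = ge.symm (g i₂ * h p.2 * (h j₂)⁻¹) := by
        apply ge.injective; rw [Equiv.apply_symm_apply, ← hgapp]
        rw [hpm]; group
      refine Finset.mem_image.2 ⟨p.2, hpU.2, ?_⟩
      rw [← this]
    calc B1.card ≤ _ := Finset.card_le_card this
      _ ≤ (Finset.univ.erase j₂).card := Finset.card_image_le
      _ = n - 1 := hcE2
  have hB2card : B2.card ≤ n - 1 := by
    have : B2 ⊆ (Finset.univ.erase i₂).image
        (fun i => (i, he.symm ((g i)⁻¹ * (g i₂ * h j₂)))) := by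
      intro p hp
      rw [hB2def, Finset.mem_filter] at hp
      obtain ⟨hpU, hpm⟩ := hp
      rw [hUdef, Finset.mem_product] at hpU
      rw [hm, hm] at hpm
      have : p.2 = he.symm ((g p.1)⁻¹ * (g i₂ * h j₂)) := by
        apply he.injective; rw [Equiv.apply_symm_apply, ← hhapp]
        rw [← hpm]; group
      refine Finset.mem_image.2 ⟨p.1, hpU.1, ?_⟩
      rw [← this]
    calc B2.card ≤ _ := Finset.card_le_card this
      _ ≤ (Finset.univ.erase i₂).card := Finset.card_image_le
      _ = n - 1 := hcE1
  -- refined bounds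
  set I : Finset (Fin n) := Finset.univ.filter (fun i : Fin n => i ≠ i₂ ∧ (i, j₂) ∈ T) with hIdef
  set J : Finset (Fin n) := Finset.univ.filter (fun j : Fin n => j ≠ j₂ ∧ (i₂, j) ∈ T) with hJdef
  have hBxcard : (Bx \ B1).card ≤ I.card * (n - 2) := by
    have hsub : Bx \ B1 ⊆ I.biUnion (fun i => {i} ×ˢ
        ((Finset.univ.erase j₂).erase (he.symm ((g i₂)⁻¹ * (g i * h j₂))))) := by
      intro p hp
      rw [Finset.mem_sdiff, hBxdef, hB1def, Finset.mem_filter, Finset.mem_filter] at hp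
      obtain ⟨⟨hpU, hpT⟩, hpB1⟩ := hp
      have hpU' := hpU
      rw [hUdef, Finset.mem_product] at hpU'
      have hpm : ¬ (m i₂ p.2 = m p.1 j₂) := fun hc => hpB1 ⟨hpU, hc⟩
      rw [hm, hm] at hpm
      refine Finset.mem_biUnion.2 ⟨p.1, ?_, ?_⟩
      · rw [hIdef]
        exact Finset.mem_filter.2 ⟨Finset.mem_univ _, Finset.ne_of_mem_erase hpU'.1, hpT⟩
      · rw [Finset.mem_product]
        refine ⟨Finset.mem_singleton.2 rfl, Finset.mem_erase.2 ⟨?_, hpU'.2⟩⟩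
        intro hc
        apply hpm
        have : h p.2 = (g i₂)⁻¹ * (g p.1 * h j₂) := by
          rw [hhapp, hc, Equiv.apply_symm_apply]
        rw [this]; group
    calc (Bx \ B1).card ≤ _ := Finset.card_le_card hsub
      _ ≤ ∑ i ∈ I, ({i} ×ˢ
        ((Finset.univ.erase j₂).erase (he.symm ((g i₂)⁻¹ * (g i * h j₂))))).card :=
        Finset.card_biUnion_le
      _ ≤ ∑ _i ∈ I, (n - 2) := by
        apply Finset.sum_le_sum
        intro i hi
        rw [hIdef, Finset.mem_filter] at hi
        rw [Finset.card_product, Finset.card_singleton, one_mul]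
        rw [Finset.card_erase_of_mem, hcE2]
        · omega
        rw [Finset.mem_erase]
        refine ⟨?_, Finset.mem_univ _⟩
        intro hc
        apply hi.2.1
        apply hg.injective
        have := congrArg he hc
        rw [Equiv.apply_symm_apply, ← hhapp] at this
        have h2 : g i * h j₂ = g i₂ * h j₂ := by
          calc g i * h j₂ = g i₂ * ((g i₂)⁻¹ * (g i * h j₂)) := by group
            _ = g i₂ * h j₂ := by rw [this]
        exact mul_right_cancel h2
      _ = I.card * (n - 2) := by rw [Finset.sum_const, smul_eq_mul]
  have hBycard : (By \ B2).card ≤ J.card * (n - 2) := by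
    have hsub : By \ B2 ⊆ J.biUnion (fun j =>
        ((Finset.univ.erase i₂).erase (ge.symm (g i₂ * h j₂ * (h j)⁻¹))) ×ˢ {j}) := by
      intro p hp
      rw [Finset.mem_sdiff, hBydef, hB2def, Finset.mem_filter, Finset.mem_filter] at hp
      obtain ⟨⟨hpU, hpT⟩, hpB2⟩ := hp
      have hpU' := hpU
      rw [hUdef, Finset.mem_product] at hpU'
      have hpm : ¬ (m p.1 p.2 = m i₂ j₂) := fun hc => hpB2 ⟨hpU, hc⟩
      rw [hm, hm] at hpm
      refine Finset.mem_biUnion.2 ⟨p.2, ?_, ?_⟩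
      · rw [hJdef]
        exact Finset.mem_filter.2 ⟨Finset.mem_univ _, Finset.ne_of_mem_erase hpU'.2, hpT⟩
      · rw [Finset.mem_product]
        refine ⟨Finset.mem_erase.2 ⟨?_, hpU'.1⟩, Finset.mem_singleton.2 rfl⟩
        intro hc
        apply hpm
        have : g p.1 = g i₂ * h j₂ * (h p.2)⁻¹ := by
          rw [hgapp, hc, Equiv.apply_symm_apply]
        rw [this]; group
    calc (By \ B2).card ≤ _ := Finset.card_le_card hsub
      _ ≤ ∑ j ∈ J, (((Finset.univ.erase i₂).erase (ge.symm (g i₂ * h j₂ * (h j)⁻¹))) ×ˢ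
          ({j} : Finset (Fin n))).card := Finset.card_biUnion_le
      _ ≤ ∑ _j ∈ J, (n - 2) := by
        apply Finset.sum_le_sum
        intro j hj
        rw [hJdef, Finset.mem_filter] at hj
        rw [Finset.card_product, Finset.card_singleton, mul_one]
        rw [Finset.card_erase_of_mem, hcE1]
        · omega
        rw [Finset.mem_erase]
        refine ⟨?_, Finset.mem_univ _⟩
        intro hc
        apply hj.2.1
        apply hh.injective
        have := congrArg ge hc
        rw [Equiv.apply_symm_apply, ← hgapp] at this
        have h2 : g i₂ * h j₂ = g i₂ * h j := by
          calc g i₂ * h j₂ = (g i₂ * h j₂ * (h j)⁻¹) * h j := by group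
            _ = g i₂ * h j := by rw [this]
        exact (mul_left_cancel h2).symm
      _ = J.card * (n - 2) := by rw [Finset.sum_const, smul_eq_mul]
  -- combine
  have hunion : U.card ≤ S.card + B0.card + B1.card + B2.card + (Bx \ B1).card + (By \ B2).card := by
    calc U.card ≤ (S ∪ B0 ∪ B1 ∪ B2 ∪ (Bx \ B1) ∪ (By \ B2)).card :=
        Finset.card_le_card hcover
      _ ≤ _ := by
        refine le_trans (Finset.card_union_le _ _) ?_
        gcongr
        refine le_trans (Finset.card_union_le _ _) ?_
        gcongr
        refine le_trans (Finset.card_union_le _ _) ?_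
        gcongr
        refine le_trans (Finset.card_union_le _ _) ?_
        gcongr
        exact Finset.card_union_le _ _
  have hmul : (n-1) * (n-1) = (n-1)*(n-3) + 2*(n-1) := by
    have h3 : n - 1 = (n - 3) + 2 := by omega
    rw [h3]; ring
  have hdist : (I.card + J.card) * (n-2) = I.card * (n-2) + J.card * (n-2) := add_mul _ _ _
  rw [hUcard] at hunion
  set t0 := (T.filter (fun c => c.1 ≠ i₂ ∧ c.2 ≠ j₂)).card
  set A := (n-1)*(n-3) with hA
  set X := I.card * (n-2) with hX
  set Y := J.card * (n-2) with hY
  omega
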